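/- Let h ∈ L²(ℝ). The following are equivalent: (i) ∫_ℝ conj(h(x−n)) h(x) dx = δ_{n,0}·‖h‖₂² for all n ∈ ℤ (the integer translates of h are orthogonal); (ii) p₂(h)(z) = ‖h‖₂² for a.e. z ∈ 𝕋. -/

import Mathlib

open MeasureTheory Complex Real Filter Topology

noncomputable section

/-- The Hilbert space `L²(ℝ)`. -/
abbrev L2R : Type := MeasureTheory.Lp ℂ 2 (volume : Measure ℝ)

/-- The normalized Haar measure `μ` of the circle `𝕋`, realized on the fundamental
domain `(0, 2π]` of `ℝ` via the identification `z = e^{-iω}`. -/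
def muT : Measure ℝ := (ENNReal.ofReal (2 * π))⁻¹ • (volume.restrict (Set.Ioc 0 (2 * π)))

/-- The measure on `𝕋 × [0,1]` underlying the Hilbert space `H_Z` (Zak-transform side). -/
def muZ : Measure (ℝ × ℝ) := muT.prod (volume.restrict (Set.Ioc 0 1))

/-- The Hilbert space `H_Z ≃ L²(𝕋 × [0,1])`, the range of the Zak transform. -/
abbrev HZ : Type := MeasureTheory.Lp ℂ 2 muZ

/-- `Z` is the Zak transform `(Zh)(z, x) = ∑ₙ zⁿ h(x + n)`, `z = e^{-iω}`, a unitary from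
`L²(ℝ)` onto `H_Z` (characterized on compactly supported functions, where the sum is
finite). -/
def IsZak (Z : L2R ≃ₗᵢ[ℂ] HZ) : Prop :=
  ∀ (g : ℝ → ℂ) (hg : MeasureTheory.MemLp g 2 (volume : Measure ℝ)),
    HasCompactSupport g →
      ⇑(Z (hg.toLp g)) =ᵐ[muZ] fun p : ℝ × ℝ =>
        ∑' n : ℤ, Complex.exp (-(Complex.I * (n : ℂ) * (p.1 : ℂ))) * g (p.2 + (n : ℝ))

/-! ### Auxiliary facts -/

namespace ZakOrtho

lemma ofReal_two_pi_ne_zero : (ENNReal.ofReal (2 * π)) ≠ 0 := by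
  simp only [ne_eq, ENNReal.ofReal_eq_zero, not_le]
  positivity

lemma ofReal_two_pi_ne_top : (ENNReal.ofReal (2 * π)) ≠ ⊤ := ENNReal.ofReal_ne_top

instance : IsFiniteMeasure (volume.restrict (Set.Ioc (0:ℝ) 1)) :=
  ⟨by simp [Real.volume_Ioc]⟩

instance : IsFiniteMeasure (volume.restrict (Set.Ioc (0:ℝ) (2 * π))) :=
  ⟨by simp only [Measure.restrict_apply_univ, Real.volume_Ioc]; exact ENNReal.ofReal_lt_top⟩

instance : IsFiniteMeasure muT := by
  rw [muT]
  refine ⟨?_⟩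
  simp only [Measure.smul_apply, smul_eq_mul]
  exact ENNReal.mul_lt_top (ENNReal.inv_lt_top.2 (by
    simp only [ENNReal.ofReal_pos]; positivity)) (measure_lt_top _ _)

instance : SigmaFinite muT := by infer_instance

/-- The translation operator `T_n h = h(· - n)` on `L²(ℝ)`. -/
def Tn (n : ℤ) : L2R →+ L2R :=
  MeasureTheory.Lp.compMeasurePreserving (fun x : ℝ => x + (-(n : ℝ)))
    (measurePreserving_add_right volume (-(n : ℝ)))

lemma coeFn_Tn (n : ℤ) (h : L2R) :
    ⇑(Tn n h) =ᵐ[volume] fun x => ⇑h (x - (n : ℝ)) := by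
  filter_upwards [MeasureTheory.Lp.coeFn_compMeasurePreserving h
    (measurePreserving_add_right volume (-(n : ℝ)))] with x hx
  rw [sub_eq_add_neg]; exact hx

lemma continuous_Tn (n : ℤ) : Continuous fun h : L2R => Tn n h :=
  (MeasureTheory.Lp.isometry_compMeasurePreserving
    (measurePreserving_add_right volume (-(n : ℝ)))).continuous

/-- The modulation function `e_n(ω,x) = exp(-inω)`. -/
def en (n : ℤ) : ℝ × ℝ → ℂ := fun p => Complex.exp (-(Complex.I * (n : ℂ) * (p.1 : ℂ)))

lemma continuous_en (n : ℤ) : Continuous (en n) := by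
  unfold en; fun_prop

lemma norm_en (n : ℤ) (p : ℝ × ℝ) : ‖en n p‖ = 1 := by
  have : -(Complex.I * (n : ℂ) * (p.1 : ℂ)) = ((-(n * p.1) : ℝ) : ℂ) * Complex.I := by
    push_cast; ring
  rw [en, this, Complex.norm_exp_ofReal_mul_I]

lemma memℒp_en_mul (n : ℤ) (G : HZ) :
    MemLp (fun p => en n p * (⇑G) p) 2 muZ := by
  refine ⟨((continuous_en n).aestronglyMeasurable).mul (MeasureTheory.Lp.aestronglyMeasurable G),
    ?_⟩
  have : eLpNorm (fun p => en n p * (⇑G) p) 2 muZ = eLpNorm (⇑G) 2 muZ :=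
    eLpNorm_congr_norm_ae (Eventually.of_forall fun p => by
      rw [norm_mul, norm_en, one_mul])
  rw [this]
  exact MeasureTheory.Lp.eLpNorm_lt_top G

/-- The modulation operator `M_n` on `H_Z`: multiplication by `e_n`. -/
def Mn (n : ℤ) (G : HZ) : HZ := (memℒp_en_mul n G).toLp _

lemma coeFn_Mn (n : ℤ) (G : HZ) :
    ⇑(Mn n G) =ᵐ[muZ] fun p => en n p * (⇑G) p :=
  (memℒp_en_mul n G).coeFn_toLp

lemma continuous_Mn (n : ℤ) : Continuous (Mn n) := by
  apply (LipschitzWith.of_dist_le_mul (K := 1) ?_).continuous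
  intro G G'
  rw [NNReal.coe_one, one_mul, MeasureTheory.Lp.dist_def, MeasureTheory.Lp.dist_def]
  apply le_of_eq
  congr 1
  apply eLpNorm_congr_norm_ae
  filter_upwards [coeFn_Mn n G, coeFn_Mn n G'] with p h1 h2
  simp only [Pi.sub_apply, h1, h2]
  rw [← mul_sub, norm_mul, norm_en, one_mul]

lemma tsum_shift (n : ℤ) (g : ℝ → ℂ) (p : ℝ × ℝ) :
    (∑' m : ℤ, Complex.exp (-(Complex.I * (m : ℂ) * (p.1 : ℂ))) * g ((p.2 + (m : ℝ)) + (-(n : ℝ))))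
      = en n p * ∑' m : ℤ, Complex.exp (-(Complex.I * (m : ℂ) * (p.1 : ℂ))) * g (p.2 + (m : ℝ)) := by
  rw [← tsum_mul_left,
    ← (Equiv.addRight n).tsum_eq (fun m : ℤ =>
      Complex.exp (-(Complex.I * (m : ℂ) * (p.1 : ℂ))) * g ((p.2 + (m : ℝ)) + (-(n : ℝ))))]
  apply tsum_congr
  intro k
  simp only [Equiv.coe_addRight]
  have e2 : (p.2 + ((k + n : ℤ) : ℝ)) + (-(n : ℝ)) = p.2 + (k : ℝ) := by push_cast; ring
  rw [e2, en]
  rw [show -(Complex.I * ((k + n : ℤ) : ℂ) * (p.1 : ℂ))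
      = (-(Complex.I * (n : ℂ) * (p.1 : ℂ))) + (-(Complex.I * (k : ℂ) * (p.1 : ℂ))) by
    push_cast; ring]
  rw [Complex.exp_add]
  ring

lemma Z_translate (Z : L2R ≃ₗᵢ[ℂ] HZ) (hZ : IsZak Z) (n : ℤ) (h : L2R) :
    Z (Tn n h) = Mn n (Z h) := by
  have τmp : MeasurePreserving (fun x : ℝ => x + (-(n : ℝ))) volume volume :=
    measurePreserving_add_right volume (-(n : ℝ))
  have hcase : ∀ (g : ℝ → ℂ) (hg : MemLp g 2 (volume : Measure ℝ)), HasCompactSupport g →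
      Z (Tn n (hg.toLp g)) = Mn n (Z (hg.toLp g)) := by
    intro g hg hgsupp
    have hTg : ⇑(Tn n (hg.toLp g)) =ᵐ[volume] fun x => g (x + (-(n : ℝ))) := by
      have h1 := MeasureTheory.Lp.coeFn_compMeasurePreserving (hg.toLp g) τmp
      have h2 := τmp.quasiMeasurePreserving.ae_eq_comp hg.coeFn_toLp
      filter_upwards [h1, h2] with x hx1 hx2
      exact hx1.trans hx2
    have hg' : MemLp (fun x => g (x + (-(n : ℝ)))) 2 (volume : Measure ℝ) :=
      (MeasureTheory.Lp.memLp (Tn n (hg.toLp g))).ae_eq hTg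
    have hg'supp : HasCompactSupport fun x => g (x + (-(n : ℝ))) :=
      hgsupp.comp_homeomorph (Homeomorph.addRight (-(n : ℝ)))
    have hTn_eq : Tn n (hg.toLp g) = hg'.toLp _ :=
      MeasureTheory.Lp.ext (hTg.trans hg'.coeFn_toLp.symm)
    rw [hTn_eq]
    apply MeasureTheory.Lp.ext
    filter_upwards [hZ _ hg' hg'supp, coeFn_Mn n (Z (hg.toLp g)), hZ g hg hgsupp]
      with p e1 e2 e3
    rw [e1, e2, e3]
    exact tsum_shift n g p
  have hc1 : Continuous fun h : L2R => Z (Tn n h) := Z.continuous.comp (continuous_Tn n)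
  have hc2 : Continuous fun h : L2R => Mn n (Z h) := (continuous_Mn n).comp Z.continuous
  have happrox : ∀ k : ℕ, ∃ g : L2R, (Z (Tn n g) = Mn n (Z g)) ∧ ‖h - g‖ ≤ (1 : ℝ)/(k + 1) := by
    intro k
    have hε : (ENNReal.ofReal ((1 : ℝ)/(k + 1))) ≠ 0 := by
      simp only [ne_eq, ENNReal.ofReal_eq_zero, not_le]
      positivity
    obtain ⟨g, gsupp, gnorm, gcont, gmem⟩ :=
      (MeasureTheory.Lp.memLp h).exists_hasCompactSupport_eLpNorm_sub_le (by norm_num) hε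
    refine ⟨gmem.toLp g, hcase g gmem gsupp, ?_⟩
    have hcoe : ⇑(h - gmem.toLp g) =ᵐ[volume] (⇑h - g) := by
      filter_upwards [MeasureTheory.Lp.coeFn_sub h (gmem.toLp g), gmem.coeFn_toLp] with x hx1 hx2
      rw [hx1]
      simp [hx2]
    rw [MeasureTheory.Lp.norm_def, eLpNorm_congr_ae hcoe]
    calc (eLpNorm (⇑h - g) 2 volume).toReal
        ≤ (ENNReal.ofReal ((1 : ℝ)/(k + 1))).toReal :=
          ENNReal.toReal_mono ENNReal.ofReal_ne_top gnorm
      _ = (1 : ℝ)/(k + 1) := ENNReal.toReal_ofReal (by positivity)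
  choose seq hseq hnorm using happrox
  have hlim : Tendsto seq atTop (𝓝 h) := by
    rw [tendsto_iff_dist_tendsto_zero]
    apply squeeze_zero (g := fun k : ℕ => (1 : ℝ)/(k + 1)) (fun k => dist_nonneg)
      (fun k => by rw [dist_comm, dist_eq_norm]; exact hnorm k)
    exact tendsto_one_div_add_atTop_nhds_zero_nat
  have l1 : Tendsto (fun k => Z (Tn n (seq k))) atTop (𝓝 (Z (Tn n h))) :=
    (hc1.tendsto h).comp hlim
  have l2 : Tendsto (fun k => Mn n (Z (seq k))) atTop (𝓝 (Mn n (Z h))) :=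
    (hc2.tendsto h).comp hlim
  exact tendsto_nhds_unique (l1.congr fun k => hseq k) l2

/-- value of `p₂(h)` at `ω`. -/
def q (F : ℝ × ℝ → ℂ) (ω : ℝ) : ℝ := ∫ x in Set.Ioc (0:ℝ) 1, ‖F (ω, x)‖ ^ 2

lemma q_nonneg (F : ℝ × ℝ → ℂ) (ω : ℝ) : 0 ≤ q F ω :=
  integral_nonneg fun x => by positivity

lemma integrable_normsq (G : HZ) : Integrable (fun p => ‖(⇑G) p‖ ^ 2) muZ := by
  have h1 := MeasureTheory.L2.integrable_inner (𝕜 := ℂ) G G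
  have h2 : Integrable (fun p => (((‖(⇑G) p‖ ^ 2 : ℝ)) : ℂ)) muZ := by
    apply h1.congr
    filter_upwards with p
    rw [RCLike.inner_apply, Complex.mul_conj']
    push_cast
    ring
  exact h2.re.congr (Eventually.of_forall fun p => by simp [← Complex.ofReal_pow])

lemma integrable_q (G : HZ) : Integrable (q (⇑G)) muT := by
  exact (integrable_normsq G).integral_prod_left

lemma measurable_q (G : HZ) : StronglyMeasurable (q (⇑G)) := by
  apply MeasureTheory.StronglyMeasurable.integral_prod_right
    (f := fun ω x => ‖(⇑G) (ω, x)‖ ^ 2)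
  exact ((MeasureTheory.Lp.stronglyMeasurable G).norm.pow 2)

lemma norm_exp_I_int_mul (n : ℤ) (ω : ℝ) : ‖Complex.exp (Complex.I * (n : ℂ) * (ω : ℂ))‖ = 1 := by
  have : Complex.I * (n : ℂ) * (ω : ℂ) = (((n : ℝ) * ω : ℝ) : ℂ) * Complex.I := by
    push_cast; ring
  rw [this, Complex.norm_exp_ofReal_mul_I]

lemma key (Z : L2R ≃ₗᵢ[ℂ] HZ) (hZ : IsZak Z) (h : L2R) (n : ℤ) :
    (∫ x : ℝ, (starRingEnd ℂ) ((⇑h) (x - (n : ℝ))) * (⇑h) x) =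
      ∫ ω, Complex.exp (Complex.I * (n : ℂ) * (ω : ℂ)) * ((q (⇑(Z h)) ω : ℝ) : ℂ) ∂muT := by
  have step1 : inner (𝕜 := ℂ) (Tn n h) h
      = (∫ x : ℝ, (starRingEnd ℂ) ((⇑h) (x - (n : ℝ))) * (⇑h) x) := by
    rw [MeasureTheory.L2.inner_def]
    apply integral_congr_ae
    filter_upwards [coeFn_Tn n h] with x hx
    rw [RCLike.inner_apply, hx, mul_comm]
  have step2 : inner (𝕜 := ℂ) (Tn n h) h = inner (𝕜 := ℂ) (Mn n (Z h)) (Z h) := by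
    rw [← Z_translate Z hZ n h, LinearIsometryEquiv.inner_map_map]
  have step3 : inner (𝕜 := ℂ) (Mn n (Z h)) (Z h)
      = ∫ p : ℝ × ℝ, Complex.exp (Complex.I * (n : ℂ) * (p.1 : ℂ))
          * (((‖(⇑(Z h)) p‖ ^ 2 : ℝ)) : ℂ) ∂muZ := by
    rw [MeasureTheory.L2.inner_def]
    apply integral_congr_ae
    filter_upwards [coeFn_Mn n (Z h)] with p hp
    rw [RCLike.inner_apply, hp, mul_comm]
    rw [map_mul, mul_assoc]
    congr 1
    · rw [en, ← Complex.exp_conj]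
      congr 1
      simp only [map_neg, map_mul, Complex.conj_I, Complex.conj_ofReal, map_intCast]
      ring
    · rw [Complex.conj_mul']
      push_cast
      ring
  have hInt : Integrable (fun p : ℝ × ℝ => Complex.exp (Complex.I * (n : ℂ) * (p.1 : ℂ))
      * (((‖(⇑(Z h)) p‖ ^ 2 : ℝ)) : ℂ)) muZ := by
    refine Integrable.bdd_mul ((integrable_normsq (Z h)).ofReal) ?_ (c := 1) (Eventually.of_forall fun p => ?_)
    · apply Continuous.aestronglyMeasurable
      fun_prop
    · rw [norm_exp_I_int_mul]
  have hInt' : Integrable (fun p : ℝ × ℝ => Complex.exp (Complex.I * (n : ℂ) * (p.1 : ℂ))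
      * (((‖(⇑(Z h)) p‖ ^ 2 : ℝ)) : ℂ)) (muT.prod (volume.restrict (Set.Ioc (0:ℝ) 1))) := hInt
  have step4 : (∫ p : ℝ × ℝ, Complex.exp (Complex.I * (n : ℂ) * (p.1 : ℂ))
          * (((‖(⇑(Z h)) p‖ ^ 2 : ℝ)) : ℂ) ∂muZ)
      = ∫ ω, Complex.exp (Complex.I * (n : ℂ) * (ω : ℂ)) * ((q (⇑(Z h)) ω : ℝ) : ℂ) ∂muT := by
    show (∫ p : ℝ × ℝ, Complex.exp (Complex.I * (n : ℂ) * (p.1 : ℂ))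
          * (((‖(⇑(Z h)) p‖ ^ 2 : ℝ)) : ℂ) ∂(muT.prod (volume.restrict (Set.Ioc (0:ℝ) 1)))) = _
    rw [MeasureTheory.integral_prod _ hInt']
    apply integral_congr_ae
    filter_upwards with ω
    rw [MeasureTheory.integral_const_mul]
    congr 1
    rw [q]
    exact integral_ofReal
  rw [← step4, ← step3, ← step2, step1]

lemma integral_exp_muT (n : ℤ) :
    (∫ ω, Complex.exp (Complex.I * (n : ℂ) * (ω : ℂ)) ∂muT) =
      if n = 0 then 1 else 0 := by
  have h2pi : (0:ℝ) ≤ 2 * π := by positivity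
  rw [muT, integral_smul_measure]
  have hIoc : (∫ ω in Set.Ioc (0:ℝ) (2 * π), Complex.exp (Complex.I * (n : ℂ) * (ω : ℂ)))
      = ∫ ω in (0:ℝ)..(2 * π), Complex.exp (Complex.I * (n : ℂ) * (ω : ℂ)) :=
    (intervalIntegral.integral_of_le h2pi).symm
  rw [hIoc]
  rcases eq_or_ne n 0 with hn | hn
  · subst hn
    simp only [Int.cast_zero, mul_zero, zero_mul, Complex.exp_zero, if_true,
      intervalIntegral.integral_const, sub_zero]
    rw [ENNReal.toReal_inv, ENNReal.toReal_ofReal h2pi]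
    rw [smul_smul, inv_mul_cancel₀ (by positivity : (2 * π : ℝ) ≠ 0), one_smul]
  · have hc : Complex.I * (n : ℂ) ≠ 0 := by
      simp [Complex.I_ne_zero, hn]
    rw [if_neg hn]
    have : (∫ ω in (0:ℝ)..(2 * π), Complex.exp (Complex.I * (n : ℂ) * (ω : ℂ)))
        = ∫ ω in (0:ℝ)..(2 * π), Complex.exp ((Complex.I * (n : ℂ)) * (ω : ℂ)) := by
      simp [mul_assoc]
    rw [this, integral_exp_mul_complex hc]
    have e1 : Complex.I * (n : ℂ) * ((2 * π : ℝ) : ℂ) = (n : ℂ) * (2 * (π : ℂ) * Complex.I) := by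
      push_cast; ring
    rw [e1, Complex.exp_int_mul_two_pi_mul_I]
    simp

instance : Fact ((0:ℝ) < 2 * π) := ⟨by positivity⟩

lemma restrict_eq_smul_muT :
    (volume.restrict (Set.Ioc (0:ℝ) (2 * π))) = (ENNReal.ofReal (2 * π)) • muT := by
  rw [muT, smul_smul, ENNReal.mul_inv_cancel ofReal_two_pi_ne_zero ofReal_two_pi_ne_top, one_smul]

lemma haar_eq_smul_volume :
    (AddCircle.haarAddCircle : Measure (AddCircle (2 * π)))
      = (ENNReal.ofReal (2 * π))⁻¹ • (volume : Measure (AddCircle (2 * π))) := by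
  rw [AddCircle.volume_eq_smul_haarAddCircle, smul_smul,
    ENNReal.inv_mul_cancel ofReal_two_pi_ne_zero ofReal_two_pi_ne_top, one_smul]

lemma integral_haar_eq (f : AddCircle (2 * π) → ℂ) :
    (∫ x, f x ∂(AddCircle.haarAddCircle : Measure (AddCircle (2 * π))))
      = ((2 * π)⁻¹ : ℝ) • ∫ ω in Set.Ioc (0:ℝ) (2 * π), f (ω : AddCircle (2 * π)) := by
  rw [haar_eq_smul_volume, integral_smul_measure, ENNReal.toReal_inv,
    ENNReal.toReal_ofReal (by positivity : (0:ℝ) ≤ 2 * π)]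
  congr 1
  rw [← AddCircle.integral_preimage (2 * π) 0 f, zero_add]

lemma integral_Ioc_eq_muT (f : ℝ → ℂ) :
    (∫ ω in Set.Ioc (0:ℝ) (2 * π), f ω) = ((2 * π : ℝ)) • ∫ ω, f ω ∂muT := by
  rw [muT, integral_smul_measure, ENNReal.toReal_inv,
    ENNReal.toReal_ofReal (by positivity : (0:ℝ) ≤ 2 * π), smul_smul,
    mul_inv_cancel₀ (by positivity : (2 * π : ℝ) ≠ 0), one_smul]

/-- Fourier uniqueness on the circle, in the form needed here. -/
lemma ae_eq_const_of_integral_exp_eq (qf : ℝ → ℝ) (hmeas : Measurable qf)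
    (hint : Integrable qf muT) (hpos : ∀ ω, 0 ≤ qf ω) (c : ℝ) (hc : 0 ≤ c)
    (hF : ∀ n : ℤ, (∫ ω, Complex.exp (Complex.I * (n : ℂ) * (ω : ℂ)) * ((qf ω : ℝ) : ℂ) ∂muT)
      = if n = 0 then (c : ℂ) else 0) :
    ∀ᵐ ω ∂muT, qf ω = c := by
  set Q : AddCircle (2 * π) → ℝ := AddCircle.liftIoc (2 * π) 0 qf with hQ
  have hQmk : ∀ ω ∈ Set.Ioc (0:ℝ) (2 * π), Q ((ω : ℝ) : AddCircle (2 * π)) = qf ω := by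
    intro ω hω
    exact AddCircle.liftIoc_coe_apply (by simpa using hω)
  have hQmeas : Measurable Q :=
    hmeas.comp (measurable_subtype_coe.comp (AddCircle.measurableEquivIoc (2 * π) 0).measurable)
  have hQpos : ∀ x, 0 ≤ Q x := fun x => hpos _
  -- Integrability of Q
  have hqf_restrict : Integrable qf (volume.restrict (Set.Ioc (0:ℝ) (2 * π))) := by
    rw [restrict_eq_smul_muT]
    exact hint.smul_measure ofReal_two_pi_ne_top
  have hQvol : Integrable Q (volume : Measure (AddCircle (2 * π))) := by
    rw [← (AddCircle.measurePreserving_mk (2 * π) 0).integrable_comp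
      hQmeas.aestronglyMeasurable]
    rw [zero_add]
    apply hqf_restrict.congr
    filter_upwards [ae_restrict_mem measurableSet_Ioc] with ω hω
    exact (hQmk ω hω).symm
  have hQhaar : Integrable Q (AddCircle.haarAddCircle : Measure (AddCircle (2 * π))) := by
    rw [haar_eq_smul_volume]
    exact hQvol.smul_measure (ENNReal.inv_ne_top.2 ofReal_two_pi_ne_zero)
  have hQcInt : Integrable (fun x => ((Q x : ℝ) : ℂ) - (c : ℂ))
      (AddCircle.haarAddCircle : Measure (AddCircle (2 * π))) :=
    hQhaar.ofReal.sub (integrable_const _)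
  -- vanishing against Fourier monomials
  have hmuT_vanish : ∀ m : ℤ,
      (∫ (ω : ℝ), Complex.exp (Complex.I * (m : ℂ) * (ω : ℂ)) * ((qf ω : ℝ) : ℂ) - 
        Complex.exp (Complex.I * (m : ℂ) * (ω : ℂ)) * (c : ℂ) ∂muT) = 0 := by
    intro m
    have h1 : Integrable (fun ω : ℝ => Complex.exp (Complex.I * (m : ℂ) * (ω : ℂ))
        * ((qf ω : ℝ) : ℂ)) muT := by
      refine Integrable.bdd_mul hint.ofReal ?_ (c := 1) (Eventually.of_forall fun ω => le_of_eq (norm_exp_I_int_mul m ω))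
      apply Continuous.aestronglyMeasurable; fun_prop
    have h2 : Integrable (fun ω : ℝ => Complex.exp (Complex.I * (m : ℂ) * (ω : ℂ)) * (c : ℂ))
        muT := by
      refine Integrable.bdd_mul (integrable_const _) ?_ (c := 1) (Eventually.of_forall fun ω => le_of_eq (norm_exp_I_int_mul m ω))
      apply Continuous.aestronglyMeasurable; fun_prop
    rw [integral_sub h1 h2, hF m, integral_mul_const, integral_exp_muT m]
    split <;> simp
  have hfour : ∀ m : ℤ, (∫ x, (fourier m x) * (((Q x : ℝ) : ℂ) - (c : ℂ))
      ∂(AddCircle.haarAddCircle : Measure (AddCircle (2 * π)))) = 0 := by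
    intro m
    rw [integral_haar_eq]
    have hcongr : (∫ ω in Set.Ioc (0:ℝ) (2 * π),
        (fourier m (ω : AddCircle (2 * π))) * (((Q ((ω : ℝ) : AddCircle (2 * π)) : ℝ) : ℂ) - (c : ℂ)))
        = ∫ ω in Set.Ioc (0:ℝ) (2 * π),
          (Complex.exp (Complex.I * (m : ℂ) * (ω : ℂ)) * ((qf ω : ℝ) : ℂ)
            - Complex.exp (Complex.I * (m : ℂ) * (ω : ℂ)) * (c : ℂ)) := by
      apply setIntegral_congr_fun measurableSet_Ioc
      intro ω hω
      dsimp only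
      rw [hQmk ω hω, fourier_coe_apply]
      rw [show (2 * ↑π * Complex.I * (m : ℂ) * (ω : ℂ) / ((2 * π : ℝ) : ℂ))
          = Complex.I * (m : ℂ) * (ω : ℂ) by
        have hpi : ((π : ℝ) : ℂ) ≠ 0 := by
          simpa using Complex.ofReal_ne_zero.2 Real.pi_ne_zero
        push_cast
        field_simp]
      ring
    rw [hcongr, integral_Ioc_eq_muT, hmuT_vanish m, smul_zero, smul_zero]
  -- the continuous linear functional `φ ↦ ∫ φ ⬝ (Q - c)` vanishes
  have hmulint : ∀ φ : C(AddCircle (2 * π), ℂ),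
      Integrable (fun x => φ x * (((Q x : ℝ) : ℂ) - (c : ℂ))) AddCircle.haarAddCircle :=
    fun φ => hQcInt.bdd_mul φ.continuous.aestronglyMeasurable
      (c := ‖φ‖) (Eventually.of_forall fun x => φ.norm_coe_le_norm x)
  obtain ⟨L, hLdef⟩ : ∃ L : C(AddCircle (2 * π), ℂ) →L[ℂ] ℂ,
      ∀ φ : C(AddCircle (2 * π), ℂ),
        L φ = ∫ x, φ x * (((Q x : ℝ) : ℂ) - (c : ℂ)) ∂AddCircle.haarAddCircle := by
    refine ⟨LinearMap.mkContinuous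
      { toFun := fun φ : C(AddCircle (2 * π), ℂ) =>
          ∫ x, φ x * (((Q x : ℝ) : ℂ) - (c : ℂ)) ∂AddCircle.haarAddCircle
        map_add' := ?_
        map_smul' := ?_ } (∫ x, ‖((Q x : ℝ) : ℂ) - (c : ℂ)‖ ∂AddCircle.haarAddCircle)
        ?_, fun φ => rfl⟩
    · intro φ ψ
      simp only [ContinuousMap.add_apply, add_mul]
      exact integral_add (hmulint φ) (hmulint ψ)
    · intro r φ
      simp only [ContinuousMap.smul_apply, smul_eq_mul, RingHom.id_apply, mul_assoc]
      rw [MeasureTheory.integral_const_mul]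
    · intro φ
      calc ‖∫ x, φ x * (((Q x : ℝ) : ℂ) - (c : ℂ)) ∂AddCircle.haarAddCircle‖
          ≤ ∫ x, ‖φ x * (((Q x : ℝ) : ℂ) - (c : ℂ))‖ ∂AddCircle.haarAddCircle :=
            norm_integral_le_integral_norm _
        _ ≤ ∫ x, ‖((Q x : ℝ) : ℂ) - (c : ℂ)‖ * ‖φ‖ ∂AddCircle.haarAddCircle := by
            apply integral_mono (hmulint φ).norm (hQcInt.norm.mul_const ‖φ‖)
            intro x
            dsimp only
            rw [norm_mul, mul_comm ‖φ x‖]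
            exact mul_le_mul_of_nonneg_left (φ.norm_coe_le_norm x) (norm_nonneg _)
        _ = (∫ x, ‖((Q x : ℝ) : ℂ) - (c : ℂ)‖ ∂AddCircle.haarAddCircle) * ‖φ‖ :=
            MeasureTheory.integral_mul_const _ _
  have hLzero : ∀ φ : C(AddCircle (2 * π), ℂ), L φ = 0 := by
    have hsub : Submodule.span ℂ (Set.range (@fourier (2 * π))) ≤ L.ker := by
      rw [Submodule.span_le]
      rintro _ ⟨m, rfl⟩
      simp only [SetLike.mem_coe, LinearMap.mem_ker, ContinuousLinearMap.coe_coe]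
      rw [hLdef]
      exact hfour m
    have hclosed := Submodule.topologicalClosure_minimal _ hsub (ContinuousLinearMap.isClosed_ker L)
    rw [span_fourier_closure_eq_top] at hclosed
    intro φ
    exact LinearMap.mem_ker.1 (hclosed Submodule.mem_top)
  -- conclude `Q = c` a.e. via two `withDensity` measures
  have hofQmeas : Measurable fun x => ENNReal.ofReal (Q x) :=
    ENNReal.measurable_ofReal.comp hQmeas
  have hQtot : ∫⁻ x, ENNReal.ofReal (Q x) ∂AddCircle.haarAddCircle ≠ ⊤ := by
    rw [← ofReal_integral_eq_lintegral_ofReal hQhaar (Eventually.of_forall hQpos)]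
    exact ENNReal.ofReal_ne_top
  have haeQ : ∀ᵐ x ∂(AddCircle.haarAddCircle : Measure (AddCircle (2 * π))), Q x = c := by
    have hlin : ∀ f : BoundedContinuousFunction (AddCircle (2 * π)) NNReal,
        (∫⁻ x, (f x : ENNReal) ∂(AddCircle.haarAddCircle.withDensity
            fun x => ENNReal.ofReal (Q x)))
          = ∫⁻ x, (f x : ENNReal) ∂(AddCircle.haarAddCircle.withDensity
            fun _ => ENNReal.ofReal c) := by
      intro f
      have hfmeas : Measurable fun x : AddCircle (2 * π) => ((f x : NNReal) : ENNReal) :=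
        (ENNReal.continuous_coe.comp f.continuous).measurable
      rw [lintegral_withDensity_eq_lintegral_mul _ hofQmeas hfmeas,
        lintegral_withDensity_eq_lintegral_mul _ measurable_const hfmeas]
      set fr : AddCircle (2 * π) → ℝ := fun x => ((f x : NNReal) : ℝ) with hfr
      have hfrcont : Continuous fr := NNReal.continuous_coe.comp f.continuous
      have hfr_nonneg : ∀ x, 0 ≤ fr x := fun x => (f x).2
      have hfr_int : Integrable fr AddCircle.haarAddCircle :=
        hfrcont.integrable_of_hasCompactSupport
          (IsCompact.of_isClosed_subset isCompact_univ (isClosed_tsupport fr) (Set.subset_univ _))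
      have hfQ_int : Integrable (fun x => fr x * Q x) AddCircle.haarAddCircle :=
        hQhaar.bdd_mul hfrcont.aestronglyMeasurable
          (c := ‖(⟨fr, hfrcont⟩ : C(AddCircle (2 * π), ℝ))‖)
            (Eventually.of_forall fun x => (⟨fr, hfrcont⟩ : C(AddCircle (2 * π), ℝ)).norm_coe_le_norm x)
      have hfc_int : Integrable (fun x => fr x * c) AddCircle.haarAddCircle :=
        hfr_int.mul_const c
      have hreal : (∫ x, fr x * (Q x - c) ∂AddCircle.haarAddCircle) = 0 := by
        have h0 := hLzero ⟨fun x => ((fr x : ℝ) : ℂ),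
          Complex.continuous_ofReal.comp hfrcont⟩
        rw [hLdef] at h0
        have h1 : (∫ x, ((fr x * (Q x - c) : ℝ) : ℂ) ∂AddCircle.haarAddCircle) = 0 := by
          rw [← h0]
          apply integral_congr_ae
          filter_upwards with x
          simp only [ContinuousMap.coe_mk]
          push_cast
          ring
        have h2 : (∫ x, ((fr x * (Q x - c) : ℝ) : ℂ) ∂AddCircle.haarAddCircle)
            = (((∫ x, fr x * (Q x - c) ∂AddCircle.haarAddCircle) : ℝ) : ℂ) := integral_ofReal
        rw [h2] at h1
        exact_mod_cast h1
      have hsplit : (∫ x, fr x * Q x ∂AddCircle.haarAddCircle)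
          = ∫ x, fr x * c ∂AddCircle.haarAddCircle := by
        have h2 : (∫ x, (fr x * Q x - fr x * c) ∂AddCircle.haarAddCircle) = 0 := by
          rw [← hreal]
          apply integral_congr_ae
          filter_upwards with x
          ring
        rw [integral_sub hfQ_int hfc_int] at h2
        linarith
      simp only [Pi.mul_apply]
      have e1 : (∫⁻ x, ENNReal.ofReal (Q x) * ((f x : NNReal) : ENNReal) ∂AddCircle.haarAddCircle)
          = ENNReal.ofReal (∫ x, fr x * Q x ∂AddCircle.haarAddCircle) := by
        rw [ofReal_integral_eq_lintegral_ofReal hfQ_int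
          (Eventually.of_forall fun x => mul_nonneg (hfr_nonneg x) (hQpos x))]
        apply lintegral_congr
        intro x
        rw [ENNReal.ofReal_mul (hfr_nonneg x), ENNReal.ofReal_coe_nnreal, mul_comm]
      have e2 : (∫⁻ x, ENNReal.ofReal c * ((f x : NNReal) : ENNReal) ∂AddCircle.haarAddCircle)
          = ENNReal.ofReal (∫ x, fr x * c ∂AddCircle.haarAddCircle) := by
        rw [ofReal_integral_eq_lintegral_ofReal hfc_int
          (Eventually.of_forall fun x => mul_nonneg (hfr_nonneg x) hc)]
        apply lintegral_congr
        intro x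
        rw [ENNReal.ofReal_mul (hfr_nonneg x), ENNReal.ofReal_coe_nnreal, mul_comm]
      rw [e1, e2, hsplit]
    have hfin : IsFiniteMeasure (AddCircle.haarAddCircle.withDensity
        fun x => ENNReal.ofReal (Q x)) := by
      constructor
      rw [withDensity_apply _ MeasurableSet.univ, Measure.restrict_univ]
      exact lt_of_le_of_ne le_top hQtot
    have hmeq := MeasureTheory.ext_of_forall_lintegral_eq_of_IsFiniteMeasure hlin
    have hae := (withDensity_eq_iff hofQmeas.aemeasurable aemeasurable_const hQtot).1 hmeq
    filter_upwards [hae] with x hx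
    exact (ENNReal.ofReal_eq_ofReal_iff (hQpos x) hc).1 hx
  -- pull everything back to `muT`
  have haevol : Q =ᵐ[(volume : Measure (AddCircle (2 * π)))] fun _ => c := by
    rw [AddCircle.volume_eq_smul_haarAddCircle]
    exact Measure.ae_smul_measure haeQ _
  have hcomp := (AddCircle.measurePreserving_mk (2 * π) 0).quasiMeasurePreserving.ae_eq_comp haevol
  rw [zero_add] at hcomp
  have hfinal : ∀ᵐ ω ∂(volume.restrict (Set.Ioc (0:ℝ) (2 * π))), qf ω = c := by
    filter_upwards [hcomp, ae_restrict_mem measurableSet_Ioc] with ω h1 h2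
    rw [← hQmk ω h2]
    exact h1
  rw [muT]
  exact Measure.ae_smul_measure hfinal _

end ZakOrtho

open ZakOrtho in
/-- Lemma 7.1: for `h ∈ L²(ℝ)` the following are equivalent:
(i) the integer translates of `h` are orthogonal, i.e.
`∫ conj(h(x-n)) h(x) dx = δ_{n,0} ‖h‖₂²` for all `n ∈ ℤ`;
(ii) `p₂(h)(z) = ∫₀¹ |(Zh)(z,x)|² dx = ‖h‖₂²` for a.e. `z ∈ 𝕋`. -/
theorem orthogonal_translates_iff_p2_const
    (Z : L2R ≃ₗᵢ[ℂ] HZ) (hZ : IsZak Z) (h : L2R) :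
    (∀ n : ℤ, (∫ x : ℝ, (starRingEnd ℂ) ((⇑h) (x - (n : ℝ))) * (⇑h) x) =
        if n = 0 then ((‖h‖ ^ 2 : ℝ) : ℂ) else 0) ↔
      ∀ᵐ ω ∂muT, (∫ x in Set.Ioc (0 : ℝ) 1, ‖(⇑(Z h)) (ω, x)‖ ^ 2) = ‖h‖ ^ 2 := by
  have hkey := key Z hZ h
  constructor
  · intro H
    exact ae_eq_const_of_integral_exp_eq (q (⇑(Z h)))
      (measurable_q (Z h)).measurable (integrable_q (Z h)) (q_nonneg _) (‖h‖ ^ 2)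
      (by positivity) (fun n => by rw [← hkey n]; exact H n)
  · intro H n
    rw [hkey n]
    have : (∫ ω, Complex.exp (Complex.I * (n : ℂ) * (ω : ℂ)) * ((q (⇑(Z h)) ω : ℝ) : ℂ) ∂muT)
        = ∫ ω, Complex.exp (Complex.I * (n : ℂ) * (ω : ℂ)) * ((‖h‖ ^ 2 : ℝ) : ℂ) ∂muT := by
      apply integral_congr_ae
      filter_upwards [H] with ω hω
      rw [show q (⇑(Z h)) ω = ‖h‖ ^ 2 from hω]
    rw [this]
    have : (∫ ω, Complex.exp (Complex.I * (n : ℂ) * (ω : ℂ)) * ((‖h‖ ^ 2 : ℝ) : ℂ) ∂muT)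
        = (∫ ω, Complex.exp (Complex.I * (n : ℂ) * (ω : ℂ)) ∂muT) * ((‖h‖ ^ 2 : ℝ) : ℂ) := by
      rw [integral_mul_const]
    rw [this, integral_exp_muT n]
    split <;> simp

end
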